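/- The polynomial f(X) = X³ − 3X + 3 is irreducible over ℚ, has exactly one real root α, and the field ℚ[α] is not a repeated radical extension of ℚ. -/

import Mathlib

/-- A field is quasireal if it has characteristic zero and its only roots of
unity are `±1`. -/
def IsQuasireal (L : Type*) [Field L] : Prop :=
  CharZero L ∧ ∀ ζ : L, (∃ n : ℕ, 0 < n ∧ ζ ^ n = 1) → ζ = 1 ∨ ζ = -1

/-- `B = A[α]` for some `α` with a positive power of `α` in `A`. -/
def RadicalStep (Q E : Type*) [Field Q] [Field E] [Algebra Q E]
    (A B : IntermediateField Q E) : Prop :=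
  ∃ α : E, (∃ n : ℕ, 0 < n ∧ α ^ n ∈ A) ∧ B = A ⊔ IntermediateField.adjoin Q {α}

/-- `B` is obtained from `A` by a finite tower of radical extensions. -/
def IsRepeatedRadical (Q E : Type*) [Field Q] [Field E] [Algebra Q E]
    (A B : IntermediateField Q E) : Prop :=
  Relation.ReflTransGen (RadicalStep Q E) A B


open Polynomial Module


noncomputable def fQ : ℚ[X] := X ^ 3 - 3 * X + 3

lemma fQ_monic : fQ.Monic := by
  unfold fQ; monicity!

lemma fQ_natDegree : fQ.natDegree = 3 := by
  unfold fQ; compute_degree!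

noncomputable def gZ : ℤ[X] := X ^ 3 - 3 * X + 3

lemma gZ_map : gZ.map (algebraMap ℤ ℚ) = fQ := by
  unfold gZ fQ
  simp [Polynomial.map_add, Polynomial.map_sub, Polynomial.map_mul, Polynomial.map_pow,
    Polynomial.map_ofNat]

lemma gZ_natDegree : gZ.natDegree = 3 := by
  unfold gZ; compute_degree!

lemma fQ_irred : Irreducible fQ := by
  have hg : gZ.Monic := by unfold gZ; monicity!
  have hprim : gZ.IsPrimitive := hg.isPrimitive
  rw [← gZ_map]
  rw [← hprim.irreducible_iff_irreducible_map_fraction_map]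
  have hprime : (Ideal.span {(3:ℤ)}).IsPrime := by
    rw [Ideal.span_singleton_prime (by norm_num)]
    norm_num [Int.prime_iff_natAbs_prime]
  refine Polynomial.IsEisensteinAt.irreducible ?_ hprime hprim (by rw [gZ_natDegree]; norm_num)
  constructor
  · rw [hg.leadingCoeff]
    intro h
    rw [Ideal.mem_span_singleton] at h
    norm_num at h
  · intro n hn
    rw [gZ_natDegree] at hn
    rw [Ideal.mem_span_singleton]
    unfold gZ
    interval_cases n <;> simp [coeff_X, coeff_one]
  · rw [Ideal.span_singleton_pow, Ideal.mem_span_singleton]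
    unfold gZ
    norm_num

lemma aeval_fQ (x : ℝ) : Polynomial.aeval x fQ = x ^ 3 - 3 * x + 3 := by
  unfold fQ
  simp [map_ofNat]

lemma root_lt (x : ℝ) (hx : x ^ 3 - 3 * x + 3 = 0) : x < -2 := by
  nlinarith [sq_nonneg (x - 1), sq_nonneg (x + 1)]

lemma root_unique (x y : ℝ) (hx : x ^ 3 - 3 * x + 3 = 0) (hy : y ^ 3 - 3 * y + 3 = 0) :
    x = y := by
  have h1 := root_lt x hx
  have h2 := root_lt y hy
  have key : (x - y) * (x^2 + x*y + y^2 - 3) = 0 := by linear_combination hx - hy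
  have pos : x^2 + x*y + y^2 - 3 > 0 := by nlinarith
  have := mul_eq_zero.mp key
  rcases this with h | h
  · linarith [sub_eq_zero.mp h]
  · linarith

lemma root_exists : ∃ x : ℝ, x ^ 3 - 3 * x + 3 = 0 := by
  have hc : ContinuousOn (fun x : ℝ => x ^ 3 - 3 * x + 3) (Set.Icc (-3) (-2)) := by
    fun_prop
  have h := intermediate_value_Icc (by norm_num : (-3:ℝ) ≤ -2) hc
  have h0 : (0:ℝ) ∈ Set.Icc ((-3:ℝ)^3 - 3*(-3) + 3) ((-2:ℝ)^3 - 3*(-2) + 3) := by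
    norm_num
  obtain ⟨x, _, hx⟩ := h h0
  exact ⟨x, hx⟩

lemma no_rat_root (q : ℚ) : q ^ 3 - 3 * q + 3 ≠ 0 := by
  intro h
  have hroot : fQ.IsRoot q := by
    unfold fQ
    simp only [IsRoot, eval_add, eval_sub, eval_mul, eval_pow, eval_X, eval_ofNat]
    linear_combination h
  obtain ⟨g, hg⟩ := dvd_iff_isRoot.mpr hroot
  rcases fQ_irred.isUnit_or_isUnit hg with hu | hu
  · exact (Polynomial.not_isUnit_X_sub_C q) hu
  · have hgne : g ≠ 0 := by
      intro h0
      rw [h0, mul_zero] at hg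
      exact fQ_monic.ne_zero hg
    have hdeg : g.natDegree = 2 := by
      have hcd := congrArg natDegree hg
      rw [fQ_natDegree, natDegree_mul (X_sub_C_ne_zero q) hgne, natDegree_X_sub_C] at hcd
      omega
    have := natDegree_eq_zero_of_isUnit hu
    omega


lemma sq_ne_five (r : ℚ) : r ^ 2 ≠ 5 := by
  intro h
  have h5 : Irrational (Real.sqrt 5) := by
    have := (by norm_num : Nat.Prime 5).irrational_sqrt
    norm_num at this
    norm_num
  have hr : ((r : ℝ)) ^ 2 = 5 := by exact_mod_cast congrArg (fun t : ℚ => (t : ℝ)) h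
  have hsq : Real.sqrt 5 = |(r : ℝ)| := by rw [← hr, Real.sqrt_sq_eq_abs]
  rw [hsq] at h5
  exact h5 ⟨|r|, by push_cast [Rat.cast_abs]; ring⟩

lemma core (a b c d : ℚ) (β : ℝ) (hβ : β ≠ 0) (hd : β ^ 3 = (d : ℝ))
    (hroot : ((a : ℝ) + b * β + c * β ^ 2) ^ 3 - 3 * ((a : ℝ) + b * β + c * β ^ 2) + 3 = 0)
    (hindep : ∀ e0 e1 e2 : ℚ, (e0 : ℝ) + e1 * β + e2 * β ^ 2 = 0 → e0 = 0 ∧ e1 = 0 ∧ e2 = 0) :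
    False := by
  -- the rational coefficient equations
  set E0 : ℚ := a^3 + b^3*d + c^3*d^2 + 6*a*b*c*d - 3*a + 3 with hE0def
  set E1 : ℚ := 3*a^2*b + 3*a*c^2*d + 3*b^2*c*d - 3*b with hE1def
  set E2 : ℚ := 3*a^2*c + 3*a*b^2 + 3*b*c^2*d - 3*c with hE2def
  have hsum : (E0 : ℝ) + E1 * β + E2 * β ^ 2 = 0 := by
    rw [hE0def, hE1def, hE2def]
    push_cast
    linear_combination hroot - ((c:ℝ)^3*d + c^3*β^3 + 3*b*c^2*β^2 + 3*b^2*c*β + (b:ℝ)^3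
      + 3*a*c^2*β + 6*a*b*c) * hd
  obtain ⟨h0, h1, h2⟩ := hindep E0 E1 E2 hsum
  -- complex cube root of unity
  set ω : ℂ := ⟨-1/2, Real.sqrt 3 / 2⟩ with hωdef
  have h33 : Real.sqrt 3 * Real.sqrt 3 = 3 := Real.mul_self_sqrt (by norm_num)
  have hω : ω ^ 2 + ω + 1 = 0 := by
    rw [pow_two, hωdef]
    apply Complex.ext <;>
      simp [Complex.mul_re, Complex.mul_im, Complex.add_re, Complex.add_im] <;>
      nlinarith [h33]
  have hω3 : ω ^ 3 = 1 := by linear_combination (ω - 1) * hω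
  have hImω : ω.im = Real.sqrt 3 / 2 := by rw [hωdef]
  have hsqrt3 : (0:ℝ) < Real.sqrt 3 := Real.sqrt_pos.mpr (by norm_num)
  -- the roots
  set α : ℝ := (a : ℝ) + b * β + c * β ^ 2 with hαdef
  set U : ℂ := (((b : ℝ) * β : ℝ) : ℂ) with hUdef
  set V : ℂ := (((c : ℝ) * β ^ 2 : ℝ) : ℂ) with hVdef
  set x : ℂ := (α : ℂ) with hxdef
  set y : ℂ := (a : ℂ) + U * ω + V * ω ^ 2 with hydef
  set z : ℂ := (a : ℂ) + U * ω ^ 2 + V * ω with hzdef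
  have hUc : U = (b : ℂ) * (β : ℂ) := by rw [hUdef]; push_cast; ring
  have hVc : V = (c : ℂ) * (β : ℂ) ^ 2 := by rw [hVdef]; push_cast; ring
  have hdC : (β : ℂ) ^ 3 = (d : ℂ) := by exact_mod_cast congrArg (fun t : ℝ => (t : ℂ)) hd
  have hxc : x = (a : ℂ) + U + V := by rw [hxdef, hαdef, hUdef, hVdef]; push_cast; ring
  have hE0C : (a:ℂ)^3 + b^3*d + c^3*d^2 + 6*a*b*c*d - 3*a + 3 = 0 := by
    have : ((E0 : ℚ) : ℂ) = 0 := by exact_mod_cast h0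
    rw [hE0def] at this; push_cast at this; linear_combination this
  have hE1C : 3*(a:ℂ)^2*b + 3*a*c^2*d + 3*b^2*c*d - 3*b = 0 := by
    have : ((E1 : ℚ) : ℂ) = 0 := by exact_mod_cast h1
    rw [hE1def] at this; push_cast at this; linear_combination this
  have hE2C : 3*(a:ℂ)^2*c + 3*a*(b:ℂ)^2 + 3*b*c^2*d - 3*c = 0 := by
    have : ((E2 : ℚ) : ℂ) = 0 := by exact_mod_cast h2
    rw [hE2def] at this; push_cast at this; linear_combination this
  have hx : x ^ 3 - 3 * x + 3 = 0 := by
    rw [hxdef]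
    exact_mod_cast congrArg (fun t : ℝ => (t : ℂ)) hroot
  have hy : y ^ 3 - 3 * y + 3 = 0 := by
    rw [hydef, hUc, hVc]
    linear_combination hE0C + ((β:ℂ)*ω) * hE1C + ((β:ℂ)^2*ω^2) * hE2C
      + ((c:ℂ)^3*(β:ℂ)^6 + c^3*β^6*ω^3 + 3*b*c^2*β^5*ω^2 + 3*b^2*c*β^4*ω + b^3*β^3
         + 3*a*c^2*β^4*ω + 6*a*b*c*β^3) * hω3
      + ((c:ℂ)^3*d + c^3*β^3 + 3*b*c^2*β^2*ω^2 + 3*b^2*c*β*ω + (b:ℂ)^3 + 3*a*c^2*β*ω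
         + 6*a*b*c) * hdC
  have hz : z ^ 3 - 3 * z + 3 = 0 := by
    rw [hzdef, hUc, hVc]
    linear_combination hE0C + ((β:ℂ)*ω^2) * hE1C + ((β:ℂ)^2*ω) * hE2C
      + ((c:ℂ)^3*(β:ℂ)^6 + 3*b*c^2*β^5*ω + 3*b^2*c*β^4*ω^2 + b^3*β^3 + b^3*β^3*ω^3
         + 6*a*b*c*β^3 + 3*a*b^2*β^2*ω) * hω3
      + ((c:ℂ)^3*d + c^3*β^3 + 3*b*c^2*β^2*ω + 3*b^2*c*β*ω^2 + (b:ℂ)^3 + 3*a*c^2*β*ω^2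
         + 6*a*b*c) * hdC
  have hω2 : ω ^ 2 = -1 - ω := by linear_combination hω
  -- b β ≠ c β²
  have huvne : (b : ℝ) * β ≠ (c : ℝ) * β ^ 2 := by
    intro huv
    have hUV : U = V := by rw [hUdef, hVdef]; exact_mod_cast congrArg (fun t : ℝ => (t : ℂ)) huv
    have hyU : y = (a : ℂ) - U := by rw [hydef, ← hUV]; linear_combination U * hω
    have hyre : y = ((((a : ℝ) - (b : ℝ) * β : ℝ)) : ℂ) := by
      rw [hyU, hUdef]; push_cast; ring
    have hyroot : ((a : ℝ) - (b : ℝ) * β) ^ 3 - 3 * ((a : ℝ) - (b : ℝ) * β) + 3 = 0 := by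
      have := hy
      rw [hyre] at this
      exact_mod_cast this
    have heq := root_unique _ _ hyroot hroot
    -- a - bβ = a + bβ + cβ² = a + 2bβ
    have hb0 : (b : ℝ) * β = 0 := by rw [hαdef] at heq; linarith [huv, heq]
    have hbq : b = 0 := by
      rcases mul_eq_zero.mp hb0 with h | h
      · exact_mod_cast h
      · exact absurd h hβ
    have hcb : (c : ℝ) * β ^ 2 = 0 := by rw [← huv, hbq]; norm_num
    have hα_rat : α = (a : ℝ) := by rw [hαdef, hb0, hcb]; ring
    apply no_rat_root a
    have hone : ((a:ℝ)) ^ 3 - 3 * (a:ℝ) + 3 = 0 := by rw [← hα_rat]; exact hroot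
    exact_mod_cast hone
  set r : ℝ := (b : ℝ) * β - (c : ℝ) * β ^ 2 with hrdef
  have hrne : r ≠ 0 := sub_ne_zero.mpr huvne
  have hUVr : U - V = ((r : ℝ) : ℂ) := by rw [hUdef, hVdef, hrdef]; push_cast; ring
  -- imaginary parts
  have hyim : y.im = r * (Real.sqrt 3 / 2) := by
    have hyeq : y = ((((a : ℝ) - (c : ℝ) * β ^ 2 : ℝ)) : ℂ) + ((r : ℝ) : ℂ) * ω := by
      rw [hydef, hω2, hUdef, hVdef, hrdef]; push_cast; ring
    rw [hyeq]
    simp only [Complex.add_im, Complex.mul_im, Complex.ofReal_re, Complex.ofReal_im, hImω]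
    ring
  have hzim : z.im = -r * (Real.sqrt 3 / 2) := by
    have hzeq : z = ((((a : ℝ) - (b : ℝ) * β : ℝ)) : ℂ) + ((-r : ℝ) : ℂ) * ω := by
      rw [hzdef, hω2, hUdef, hVdef, hrdef]; push_cast; ring
    rw [hzeq]
    simp only [Complex.add_im, Complex.mul_im, Complex.ofReal_re, Complex.ofReal_im, hImω]
    ring
  have hrs3 : r * (Real.sqrt 3 / 2) ≠ 0 := by positivity
  have hxy : x - y ≠ 0 := by
    intro h
    have := congrArg Complex.im h
    rw [Complex.sub_im, hyim, hxdef, Complex.ofReal_im, Complex.zero_im] at this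
    apply hrs3; linarith
  have hxz : x - z ≠ 0 := by
    intro h
    have := congrArg Complex.im h
    rw [Complex.sub_im, hzim, hxdef, Complex.ofReal_im, Complex.zero_im] at this
    apply hrs3; linarith
  have hyz : y - z ≠ 0 := by
    intro h
    have := congrArg Complex.im h
    rw [Complex.sub_im, hyim, hzim, Complex.zero_im] at this
    apply hrs3; linarith
  -- symmetric function relations
  have gxy : x ^ 2 + x * y + y ^ 2 - 3 = 0 := by
    have hkey : (x - y) * (x ^ 2 + x * y + y ^ 2 - 3) = 0 := by linear_combination hx - hy
    rcases mul_eq_zero.mp hkey with h | h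
    · exact absurd h hxy
    · exact h
  have gxz : x ^ 2 + x * z + z ^ 2 - 3 = 0 := by
    have hkey : (x - z) * (x ^ 2 + x * z + z ^ 2 - 3) = 0 := by linear_combination hx - hz
    rcases mul_eq_zero.mp hkey with h | h
    · exact absurd h hxz
    · exact h
  have gyz : y ^ 2 + y * z + z ^ 2 - 3 = 0 := by
    have hkey : (y - z) * (y ^ 2 + y * z + z ^ 2 - 3) = 0 := by linear_combination hy - hz
    rcases mul_eq_zero.mp hkey with h | h
    · exact absurd h hyz
    · exact h
  have hs : x + y + z = 0 := by
    have hkey : (y - z) * (x + y + z) = 0 := by linear_combination gxy - gxz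
    rcases mul_eq_zero.mp hkey with h | h
    · exact absurd h hyz
    · exact h
  have he2 : x * y + x * z + y * z = -3 := by
    linear_combination (2/3 * (x + y + z)) * hs - (1/3) * gxy - (1/3) * gxz - (1/3) * gyz
  have he3 : x * y * z = -3 := by
    linear_combination x * he2 - x ^ 2 * hs + hx
  have hδ : ((x - y) * (x - z) * (y - z)) ^ 2 = -135 := by
    linear_combination
      ((x+y+z)*(x*y+x*z+y*z)^2 - 4*(x+y+z)^2*(x*y*z) + 18*(x*y+x*z+y*z)*(x*y*z)) * hs
      + (-4*((x*y+x*z+y*z)^2 - 3*(x*y+x*z+y*z) + 9)) * he2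
      + (-27*(x*y*z - 3)) * he3
  -- the explicit discriminant
  have step1 : (x - y) * (x - z) = 3 * (U ^ 2 + U * V + V ^ 2) := by
    rw [hxc, hydef, hzdef]
    linear_combination (-2*V^2 + V^2*ω - U*V - U*V*ω + U*V*ω^2 - 2*U^2 + U^2*ω) * hω
  have step2 : (y - z) ^ 2 = -3 * (U - V) ^ 2 := by
    rw [hydef, hzdef]
    linear_combination (3*V^2 - 3*V^2*ω + V^2*ω^2 - 6*U*V + 6*U*V*ω - 2*U*V*ω^2
      + 3*U^2 - 3*U^2*ω + U^2*ω^2) * hω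
  have hδ2 : ((x - y) * (x - z) * (y - z)) ^ 2 = -27 * (U ^ 3 - V ^ 3) ^ 2 := by
    calc ((x - y) * (x - z) * (y - z)) ^ 2
        = ((x - y) * (x - z)) ^ 2 * (y - z) ^ 2 := by ring
      _ = (3 * (U ^ 2 + U * V + V ^ 2)) ^ 2 * (-3 * (U - V) ^ 2) := by rw [step1, step2]
      _ = -27 * (U ^ 3 - V ^ 3) ^ 2 := by ring
  have hU3V3 : U ^ 3 - V ^ 3 = ((b ^ 3 * d - c ^ 3 * d ^ 2 : ℚ) : ℂ) := by
    rw [hUc, hVc]; push_cast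
    linear_combination ((b : ℂ) ^ 3 - (c : ℂ) ^ 3 * ((β : ℂ) ^ 3 + (d : ℂ))) * hdC
  have hfinal : ((b ^ 3 * d - c ^ 3 * d ^ 2 : ℚ) : ℂ) ^ 2 = 5 := by
    have h27 : (-27 : ℂ) * ((b ^ 3 * d - c ^ 3 * d ^ 2 : ℚ) : ℂ) ^ 2 = -135 := by
      rw [← hU3V3]; linear_combination hδ - hδ2
    linear_combination (-1/27 : ℂ) * h27
  have hfinalQ : (b ^ 3 * d - c ^ 3 * d ^ 2 : ℚ) ^ 2 = 5 := by exact_mod_cast hfinal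
  exact sq_ne_five _ hfinalQ

lemma cube_rational (B : IntermediateField ℚ ℝ) [FiniteDimensional ℚ B]
    (h3 : finrank ℚ B = 3) (β : B) (n : ℕ) (hn : 0 < n) (q : ℚ)
    (hq : β ^ n = algebraMap ℚ B q) :
    ∃ d : ℚ, ((β : ℝ)) ^ 3 = (d : ℝ) := by
  have hnorm := Algebra.norm_eq_prod_embeddings ℚ ℂ β
  set N : ℚ := Algebra.norm ℚ β with hNdef
  -- each embedding has the same absolute value
  have habs : ∀ σ : B →ₐ[ℚ] ℂ, ‖σ β‖ = |(β : ℝ)| := by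
    intro σ
    have h1 : (σ β) ^ n = (q : ℂ) := by
      rw [← map_pow, hq]
      simp [AlgHom.commutes]
    have h2 : ‖σ β‖ ^ n = |(q : ℝ)| := by
      rw [← norm_pow, h1, show ((q : ℚ) : ℂ) = (((q : ℝ)) : ℂ) from by push_cast; ring]
      exact (Complex.norm_real _).trans (Real.norm_eq_abs _)
    have h3' : |(β : ℝ)| ^ n = |(q : ℝ)| := by
      have hcast : ((β : ℝ)) ^ n = (q : ℝ) := by
        have := congrArg (algebraMap B ℝ) hq
        simpa using this
      rw [← abs_pow, hcast]
    have := h2.trans h3'.symm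
    exact (pow_left_inj₀ (norm_nonneg _) (abs_nonneg _) hn.ne').mp this
  -- |N| = |β|^3
  have hcard : Fintype.card (B →ₐ[ℚ] ℂ) = 3 := by rw [AlgHom.card]; exact h3
  have hNabs : |(N : ℝ)| = |(β : ℝ)| ^ 3 := by
    have h1 : ‖algebraMap ℚ ℂ N‖ = ∏ σ : B →ₐ[ℚ] ℂ, ‖σ β‖ := by
      rw [hnorm]; exact norm_prod _ _
    have h2 : (∏ σ : B →ₐ[ℚ] ℂ, ‖σ β‖) = |(β : ℝ)| ^ 3 := by
      rw [Finset.prod_congr rfl fun σ _ => habs σ, Finset.prod_const, Finset.card_univ, hcard]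
    have h4 : ‖algebraMap ℚ ℂ N‖ = |(N : ℝ)| := by
      rw [eq_ratCast (algebraMap ℚ ℂ) N,
        show ((N : ℚ) : ℂ) = (((N : ℝ)) : ℂ) from by push_cast; ring]
      exact (Complex.norm_real _).trans (Real.norm_eq_abs _)
    rw [h4] at h1
    rw [h1, h2]
  rcases le_or_gt 0 ((β : ℝ)) with hbpos | hbneg
  · refine ⟨|N|, ?_⟩
    calc ((β : ℝ)) ^ 3 = |(β : ℝ)| ^ 3 := by rw [abs_of_nonneg hbpos]
      _ = |(N : ℝ)| := hNabs.symm
      _ = ((|N| : ℚ) : ℝ) := by push_cast; ring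
  · refine ⟨-|N|, ?_⟩
    calc ((β : ℝ)) ^ 3 = -(|(β : ℝ)| ^ 3) := by rw [abs_of_neg hbneg]; ring
      _ = -|(N : ℝ)| := by rw [hNabs]
      _ = ((-|N| : ℚ) : ℝ) := by push_cast; ring


lemma isIntegral_root (α : ℝ) (hα : Polynomial.aeval α fQ = 0) : IsIntegral ℚ α :=
  ⟨fQ, fQ_monic, hα⟩

lemma minpoly_root (α : ℝ) (hα : Polynomial.aeval α fQ = 0) : minpoly ℚ α = fQ :=
  (minpoly.eq_of_irreducible_of_monic fQ_irred hα fQ_monic).symm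

open IntermediateField Module in
lemma finrank_adjoin_root (α : ℝ) (hα : Polynomial.aeval α fQ = 0) :
    finrank ℚ (IntermediateField.adjoin ℚ {α} : IntermediateField ℚ ℝ) = 3 := by
  rw [IntermediateField.adjoin.finrank (isIntegral_root α hα), minpoly_root α hα, fQ_natDegree]

open IntermediateField Module in
lemma main_not_radical (α : ℝ) (hα : Polynomial.aeval α fQ = 0) :
    ¬ IsRepeatedRadical ℚ ℝ ⊥ (IntermediateField.adjoin ℚ {α}) := by
  intro hrr
  have hαroot : α ^ 3 - 3 * α + 3 = 0 := by rw [← aeval_fQ α]; exact hα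
  set K : IntermediateField ℚ ℝ := IntermediateField.adjoin ℚ {α} with hKdef
  have hint : IsIntegral ℚ α := isIntegral_root α hα
  haveI : FiniteDimensional ℚ K := IntermediateField.adjoin.finiteDimensional hint
  have hK3 : finrank ℚ K = 3 := finrank_adjoin_root α hα
  have key : ∀ B : IntermediateField ℚ ℝ, Relation.ReflTransGen (RadicalStep ℚ ℝ) ⊥ B →
      B ≤ K → B = ⊥ := by
    intro B h
    induction h with
    | refl => intro _; rfl
    | @tail A B hA hstep ih =>
      intro hBK
      obtain ⟨β, ⟨n, hn, hpow⟩, hBeq⟩ := hstep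
      have hA0 : A = ⊥ := ih (le_trans (hBeq ▸ (le_sup_left : A ≤ A ⊔ _)) hBK)
      rw [hA0] at hBeq hpow
      rw [bot_sup_eq] at hBeq
      by_contra hne
      have hdvd : finrank ℚ B ∣ 3 := by
        rw [← hK3]
        exact dvd_of_mul_right_eq _ (IntermediateField.finrank_bot_mul_relfinrank hBK)
      rcases (Nat.prime_three.eq_one_or_self_of_dvd _ hdvd) with h1 | h3
      · exact hne (IntermediateField.finrank_eq_one_iff.mp h1)
      have hBK3 : B = K := eq_of_le_of_finrank_eq hBK (by rw [hK3, h3])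
      haveI : FiniteDimensional ℚ B := hBK3.symm ▸ (inferInstance : FiniteDimensional ℚ K)
      have hβne : β ≠ 0 := by
        rintro rfl
        apply hne
        rw [hBeq]
        exact IntermediateField.adjoin_zero
      have hβmem : β ∈ B := hBeq ▸ IntermediateField.mem_adjoin_simple_self ℚ β
      obtain ⟨q, hq⟩ := IntermediateField.mem_bot.mp hpow
      obtain ⟨d, hd⟩ := cube_rational B h3 ⟨β, hβmem⟩ n hn q
        (by
          apply Subtype.ext
          rw [SubmonoidClass.coe_pow]
          show β ^ n = _
          rw [← hq]
          rfl)
      have hd' : β ^ 3 = (d : ℝ) := hd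
      have hβint : IsIntegral ℚ β := by
        have h1 : IsIntegral ℚ (⟨β, hβmem⟩ : B) := IsIntegral.of_finite ℚ _
        exact IntermediateField.isIntegral_iff.mp h1
      have hβdeg : (minpoly ℚ β).natDegree = 3 := by
        have hfr := IntermediateField.adjoin.finrank hβint
        rw [← hBeq] at hfr
        rw [← hfr, h3]
      have hindep : ∀ e0 e1 e2 : ℚ, (e0 : ℝ) + e1 * β + e2 * β ^ 2 = 0 →
          e0 = 0 ∧ e1 = 0 ∧ e2 = 0 := by
        intro e0 e1 e2 heq
        set P : ℚ[X] := C e0 + C e1 * X + C e2 * X ^ 2 with hPdef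
        have hPeval : Polynomial.aeval β P = 0 := by
          rw [hPdef]
          simp only [map_add, map_mul, aeval_C, aeval_X, map_pow]
          have : (algebraMap ℚ ℝ) e0 = (e0 : ℝ) := by norm_num
          rw [this, show (algebraMap ℚ ℝ) e1 = (e1 : ℝ) from by norm_num,
            show (algebraMap ℚ ℝ) e2 = (e2 : ℝ) from by norm_num]
          exact heq
        by_cases hP0 : P = 0
        · have c0 : P.coeff 0 = e0 := by simp [hPdef, coeff_one]
          have c1 : P.coeff 1 = e1 := by simp [hPdef, coeff_one]
          have c2 : P.coeff 2 = e2 := by simp [hPdef, coeff_one]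
          rw [hP0] at c0 c1 c2
          simp at c0 c1 c2
          exact ⟨c0.symm, c1.symm, c2.symm⟩
        · exfalso
          have hdegle := minpoly.degree_le_of_ne_zero ℚ β hP0 hPeval
          have hP2 : P.degree ≤ 2 := by
            rw [hPdef]
            compute_degree
          have hm3 : (minpoly ℚ β).degree = 3 := by
            rw [degree_eq_natDegree (minpoly.ne_zero hβint), hβdeg]
            rfl
          rw [hm3] at hdegle
          have := le_trans hdegle hP2
          norm_num at this
      have hαmem : α ∈ IntermediateField.adjoin ℚ {β} := by
        rw [← hBeq, hBK3]
        exact IntermediateField.mem_adjoin_simple_self ℚ α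
      obtain ⟨p, hp⟩ : ∃ p : ℚ[X], Polynomial.aeval β p = α := by
        have h1 : α ∈ Algebra.adjoin ℚ ({β} : Set ℝ) := by
          have h2 := IntermediateField.adjoin_simple_toSubalgebra_of_isAlgebraic hβint.isAlgebraic
          rw [← h2]
          exact hαmem
        rwa [Algebra.adjoin_singleton_eq_range_aeval, AlgHom.mem_range] at h1
      have hmonic : (X ^ 3 - C d : ℚ[X]).Monic := monic_X_pow_sub_C d (by norm_num)
      set pr : ℚ[X] := p %ₘ (X ^ 3 - C d) with hprdef
      have hmz : Polynomial.aeval β (X ^ 3 - C d : ℚ[X]) = 0 := by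
        simp only [map_sub, map_pow, aeval_X, aeval_C]
        rw [show (algebraMap ℚ ℝ) d = (d : ℝ) from by norm_num, hd']
        ring
      have hevalpr : Polynomial.aeval β pr = α := by
        have hsplit := Polynomial.modByMonic_add_div p (X ^ 3 - C d)
        have := congrArg (Polynomial.aeval β) hsplit
        rw [map_add, map_mul, hmz, zero_mul, add_zero] at this
        rw [hprdef, this, hp]
      have hdegpr : pr.natDegree < 3 := by
        by_cases h0 : pr = 0
        · rw [h0]; simp
        · have hlt := degree_modByMonic_lt p hmonic
          have hdm : (X ^ 3 - C d : ℚ[X]).degree = 3 := by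
            rw [degree_eq_natDegree hmonic.ne_zero]
            have : (X ^ 3 - C d : ℚ[X]).natDegree = 3 := by compute_degree!
            rw [this]
            rfl
          rw [hdm] at hlt
          rw [← hprdef] at hlt
          exact (natDegree_lt_iff_degree_lt h0).mpr hlt
      have hsum : α = (pr.coeff 0 : ℝ) + pr.coeff 1 * β + pr.coeff 2 * β ^ 2 := by
        rw [← hevalpr, Polynomial.aeval_eq_sum_range' hdegpr]
        rw [Finset.sum_range_succ, Finset.sum_range_succ, Finset.sum_range_one]
        simp [Rat.smul_def]
        try ring
      have hroot' : ((pr.coeff 0 : ℝ) + pr.coeff 1 * β + pr.coeff 2 * β ^ 2) ^ 3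
          - 3 * ((pr.coeff 0 : ℝ) + pr.coeff 1 * β + pr.coeff 2 * β ^ 2) + 3 = 0 := by
        rw [← hsum]
        exact hαroot
      exact core (pr.coeff 0) (pr.coeff 1) (pr.coeff 2) d β hβne hd' hroot' hindep
  have hfinal : K = ⊥ := key K hrr le_rfl
  rw [hfinal] at hK3
  rw [IntermediateField.finrank_bot] at hK3
  norm_num at hK3

theorem stmt19 :
    Irreducible (Polynomial.X ^ 3 - 3 * Polynomial.X + 3 : Polynomial ℚ) ∧
    (∃! α : ℝ,
      Polynomial.aeval α (Polynomial.X ^ 3 - 3 * Polynomial.X + 3 : Polynomial ℚ) = 0) ∧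
    (∀ α : ℝ,
      Polynomial.aeval α (Polynomial.X ^ 3 - 3 * Polynomial.X + 3 : Polynomial ℚ) = 0 →
      ¬ IsRepeatedRadical ℚ ℝ ⊥ (IntermediateField.adjoin ℚ {α})) := by
  refine ⟨fQ_irred, ?_, ?_⟩
  · obtain ⟨x, hx⟩ := root_exists
    refine ⟨x, ?_, ?_⟩
    · show Polynomial.aeval x fQ = 0
      rw [aeval_fQ]; exact hx
    · intro y hy
      have hy' : Polynomial.aeval y fQ = 0 := hy
      rw [aeval_fQ] at hy'
      exact root_unique y x hy' hx
  · intro α hα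
    exact main_not_radical α hα
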